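/- Let R be a (not necessarily unital) ring which is the union R = A ∪ B ∪ C of three proper, pairwise distinct subrings A, B, C. Let K = A ∩ B ∩ C, A' = A \ (B ∪ C), B' = B \ (A ∪ C), C' = C \ (A ∪ B). Then A' + B' ⊆ C', B' + C' ⊆ A', C' + A' ⊆ B', and moreover A' + A' ⊆ K, B' + B' ⊆ K, C' + C' ⊆ K. -/
import Mathlib


open Pointwise

private lemma mix_aux {R : Type*} [NonUnitalRing R] {X Y Z : NonUnitalSubring R}
    (hcov : ∀ r : R, r ∈ X ∨ r ∈ Y ∨ r ∈ Z)
    {x y : R} (hxX : x ∈ X) (hxY : x ∉ Y) (_hxZ : x ∉ Z)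
    (hyY : y ∈ Y) (hyX : y ∉ X) (_hyZ : y ∉ Z) :
    x + y ∈ Z ∧ x + y ∉ X ∧ x + y ∉ Y := by
  have hX : x + y ∉ X := fun h => hyX (by simpa using X.sub_mem h hxX)
  have hY : x + y ∉ Y := fun h => hxY (by simpa using Y.sub_mem h hyY)
  rcases hcov (x + y) with h | h | h
  · exact absurd h hX
  · exact absurd h hY
  · exact ⟨h, hX, hY⟩

private lemma ne_top_aux {R : Type*} [NonUnitalRing R] (X Y Z : NonUnitalSubring R)
    (hcov : ∀ r : R, r ∈ X ∨ r ∈ Y ∨ r ∈ Z)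
    (hX : X ≠ ⊤) (hY : Y ≠ ⊤) :
    ∃ z, z ∈ Z ∧ z ∉ X ∧ z ∉ Y := by
  by_contra h
  push_neg at h
  have hcov2 : ∀ r : R, r ∈ X ∨ r ∈ Y := by
    intro r
    rcases hcov r with hr | hr | hr
    · exact Or.inl hr
    · exact Or.inr hr
    · by_contra hc
      push_neg at hc
      exact hc.2 (h r hr hc.1)
  have hXY : ¬ (∀ x, x ∈ X → x ∈ Y) := by
    intro hs
    exact hY ((NonUnitalSubring.eq_top_iff' Y).2
      fun r => (hcov2 r).elim (hs r) id)
  have hYX : ¬ (∀ y, y ∈ Y → y ∈ X) := by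
    intro hs
    exact hX ((NonUnitalSubring.eq_top_iff' X).2
      fun r => (hcov2 r).elim id (hs r))
  push_neg at hXY hYX
  obtain ⟨a, haX, haY⟩ := hXY
  obtain ⟨b, hbY, hbX⟩ := hYX
  rcases hcov2 (a + b) with hab | hab
  · exact hbX (by simpa using X.sub_mem hab haX)
  · exact haY (by simpa using Y.sub_mem hab hbY)

/-- If a ring is the union of three proper, pairwise distinct subrings `A`, `B`, `C`,
with `K = A ∩ B ∩ C`, `A' = A \ (B ∪ C)`, `B' = B \ (A ∪ C)`, `C' = C \ (A ∪ B)`, then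
`A' + B' ⊆ C'`, `B' + C' ⊆ A'`, `C' + A' ⊆ B'`, and `A' + A' ⊆ K`, `B' + B' ⊆ K`,
`C' + C' ⊆ K`. -/
theorem union_three_subrings_sumsets (R : Type*) [NonUnitalRing R]
    (A B C : NonUnitalSubring R) (hA : A ≠ ⊤) (hB : B ≠ ⊤) (hC : C ≠ ⊤)
    (hAB : A ≠ B) (hAC : A ≠ C) (hBC : B ≠ C)
    (hcover : (A : Set R) ∪ (B : Set R) ∪ (C : Set R) = Set.univ)
    (K A' B' C' : Set R)
    (hK : K = (A : Set R) ∩ (B : Set R) ∩ (C : Set R))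
    (hA' : A' = (A : Set R) \ ((B : Set R) ∪ (C : Set R)))
    (hB' : B' = (B : Set R) \ ((A : Set R) ∪ (C : Set R)))
    (hC' : C' = (C : Set R) \ ((A : Set R) ∪ (B : Set R))) :
    A' + B' ⊆ C' ∧ B' + C' ⊆ A' ∧ C' + A' ⊆ B' ∧
      A' + A' ⊆ K ∧ B' + B' ⊆ K ∧ C' + C' ⊆ K := by
  subst hK hA' hB' hC'
  have hcov : ∀ r : R, r ∈ A ∨ r ∈ B ∨ r ∈ C := by
    intro r
    have : r ∈ ((A : Set R) ∪ (B : Set R) ∪ (C : Set R)) := hcover ▸ Set.mem_univ r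
    rcases this with (h | h) | h
    · exact Or.inl h
    · exact Or.inr (Or.inl h)
    · exact Or.inr (Or.inr h)
  have memA' : ∀ x, x ∈ ((A : Set R) \ ((B : Set R) ∪ (C : Set R))) ↔
      x ∈ A ∧ x ∉ B ∧ x ∉ C := by
    intro x; simp [Set.mem_diff, not_or, and_assoc]
  have memB' : ∀ x, x ∈ ((B : Set R) \ ((A : Set R) ∪ (C : Set R))) ↔
      x ∈ B ∧ x ∉ A ∧ x ∉ C := by
    intro x; simp [Set.mem_diff, not_or, and_assoc]
  have memC' : ∀ x, x ∈ ((C : Set R) \ ((A : Set R) ∪ (B : Set R))) ↔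
      x ∈ C ∧ x ∉ A ∧ x ∉ B := by
    intro x; simp [Set.mem_diff, not_or, and_assoc]
  have hcovBCA : ∀ r : R, r ∈ B ∨ r ∈ C ∨ r ∈ A := fun r => by
    rcases hcov r with h|h|h <;> tauto
  have hcovCAB : ∀ r : R, r ∈ C ∨ r ∈ A ∨ r ∈ B := fun r => by
    rcases hcov r with h|h|h <;> tauto
  have hABC : ∀ x y : R, (x ∈ A ∧ x ∉ B ∧ x ∉ C) → (y ∈ B ∧ y ∉ A ∧ y ∉ C) →
      x + y ∈ C ∧ x + y ∉ A ∧ x + y ∉ B := fun x y hx hy =>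
    mix_aux hcov hx.1 hx.2.1 hx.2.2 hy.1 hy.2.1 hy.2.2
  have hBCA : ∀ x y : R, (x ∈ B ∧ x ∉ A ∧ x ∉ C) → (y ∈ C ∧ y ∉ A ∧ y ∉ B) →
      x + y ∈ A ∧ x + y ∉ B ∧ x + y ∉ C := fun x y hx hy => by
    have := mix_aux hcovBCA hx.1 hx.2.2 hx.2.1 hy.1 hy.2.2 hy.2.1
    tauto
  have hCAB : ∀ x y : R, (x ∈ C ∧ x ∉ A ∧ x ∉ B) → (y ∈ A ∧ y ∉ B ∧ y ∉ C) →
      x + y ∈ B ∧ x + y ∉ C ∧ x + y ∉ A := fun x y hx hy => by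
    have := mix_aux hcovCAB hx.1 hx.2.1 hx.2.2 hy.1 hy.2.2 hy.2.1
    tauto
  have diag : ∀ (X Y Z : NonUnitalSubring R),
      (∀ r : R, r ∈ X ∨ r ∈ Y ∨ r ∈ Z) → X ≠ ⊤ → Y ≠ ⊤ → Z ≠ ⊤ →
      ∀ x y : R, (x ∈ X ∧ x ∉ Y ∧ x ∉ Z) → (y ∈ X ∧ y ∉ Y ∧ y ∉ Z) →
      x + y ∈ X ∧ x + y ∈ Y ∧ x + y ∈ Z := by
    intro X Y Z hc hX hY hZ x y hx hy
    have hcXZY : ∀ r : R, r ∈ X ∨ r ∈ Z ∨ r ∈ Y := fun r => by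
      rcases hc r with h|h|h <;> tauto
    refine ⟨X.add_mem hx.1 hy.1, ?_, ?_⟩
    · obtain ⟨b, hbY, hbX, hbZ⟩ := ne_top_aux X Z Y hcXZY hX hZ
      have h1 := mix_aux hc hx.1 hx.2.1 hx.2.2 hbY hbX hbZ
      have hc2 : ∀ r : R, r ∈ Z ∨ r ∈ X ∨ r ∈ Y := fun r => by
        rcases hc r with h|h|h <;> tauto
      have h2 := mix_aux hc2 h1.1 h1.2.1 h1.2.2 hy.1 hy.2.2 hy.2.1
      have hsub : (x + b + y) - b ∈ Y := Y.sub_mem h2.1 hbY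
      have heq : (x + b + y) - b = x + y := by abel
      rwa [heq] at hsub
    · obtain ⟨c, hcZ, hcX, hcY⟩ := ne_top_aux X Y Z hc hX hY
      have h1 := mix_aux hcXZY hx.1 hx.2.2 hx.2.1 hcZ hcX hcY
      have hc2 : ∀ r : R, r ∈ Y ∨ r ∈ X ∨ r ∈ Z := fun r => by
        rcases hc r with h|h|h <;> tauto
      have h2 := mix_aux hc2 h1.1 h1.2.1 h1.2.2 hy.1 hy.2.1 hy.2.2
      have hsub : (x + c + y) - c ∈ Z := Z.sub_mem h2.1 hcZ
      have heq : (x + c + y) - c = x + y := by abel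
      rwa [heq] at hsub
  refine ⟨?_, ?_, ?_, ?_, ?_, ?_⟩
  · rintro r ⟨x, hx, y, hy, rfl⟩
    exact (memC' _).2 (hABC x y ((memA' x).1 hx) ((memB' y).1 hy))
  · rintro r ⟨x, hx, y, hy, rfl⟩
    exact (memA' _).2 (hBCA x y ((memB' x).1 hx) ((memC' y).1 hy))
  · rintro r ⟨x, hx, y, hy, rfl⟩
    have h := hCAB x y ((memC' x).1 hx) ((memA' y).1 hy)
    exact (memB' _).2 ⟨h.1, h.2.2, h.2.1⟩
  · rintro r ⟨x, hx, y, hy, rfl⟩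
    have h := diag A B C hcov hA hB hC x y ((memA' x).1 hx) ((memA' y).1 hy)
    exact ⟨⟨h.1, h.2.1⟩, h.2.2⟩
  · rintro r ⟨x, hx, y, hy, rfl⟩
    have h := diag B A C (fun r => by rcases hcov r with h|h|h <;> tauto) hB hA hC
      x y (by have := (memB' x).1 hx; tauto) (by have := (memB' y).1 hy; tauto)
    exact ⟨⟨h.2.1, h.1⟩, h.2.2⟩
  · rintro r ⟨x, hx, y, hy, rfl⟩
    have h := diag C A B (fun r => by rcases hcov r with h|h|h <;> tauto) hC hA hB
      x y (by have := (memC' x).1 hx; tauto) (by have := (memC' y).1 hy; tauto)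
    exact ⟨⟨h.2.1, h.2.2⟩, h.1⟩
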